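/- Let N > 0, u₀ ∈ ℝ³ with ‖u₀‖ < N, and let β : [c,b] → ℝ³ be a C¹ curve with β(c) = u₀, whose unit tangent α(t) = β'(t)/‖β'(t)‖ makes angle at most 2ε with the direction β(t) − u₀ whenever β(t) ≠ u₀, where ε < π/8. Then at every t with ‖β(t)‖ ≥ 10N, the angle θ(t) between β(t) and β'(t) satisfies cos θ(t) ≥ 0.9·cos(2ε) − 0.1 > 1/2, hence θ(t) < π/3. -/

import Mathlib

open Set InnerProductGeometry Real

/-- Key estimate of Lemma 5: if a C¹ curve starts at `u₀` with `‖u₀‖ < N` and its unit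
tangent always makes angle at most `2ε` (`0 < ε < π/8`) with the direction `β t − u₀`,
then wherever `‖β t‖ ≥ 10N` the angle `θ t` between `β t` and `β' t` satisfies
`cos (θ t) ≥ 0.9 cos (2ε) − 0.1 > 1/2`, hence `θ t < π/3`. -/
theorem cone_angle_estimate
    (c b N ε : ℝ) (hcb : c ≤ b) (hN : 0 < N) (hε : 0 < ε) (hε' : ε < π / 8)
    (u₀ : EuclideanSpace ℝ (Fin 3)) (hu₀ : ‖u₀‖ < N)
    (β β' : ℝ → EuclideanSpace ℝ (Fin 3))
    (hderiv : ∀ t ∈ Icc c b, HasDerivWithinAt β (β' t) (Icc c b) t)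
    (hβc : β c = u₀)
    (hβ'ne : ∀ t ∈ Icc c b, β' t ≠ 0)
    (hangle : ∀ t ∈ Icc c b, β t ≠ u₀ → angle (β' t) (β t - u₀) ≤ 2 * ε) :
    ∀ t ∈ Icc c b, 10 * N ≤ ‖β t‖ →
      0.9 * Real.cos (2 * ε) - 0.1 ≤ Real.cos (angle (β t) (β' t)) ∧
      (1 : ℝ) / 2 < 0.9 * Real.cos (2 * ε) - 0.1 ∧
      angle (β t) (β' t) < π / 3 := by
  have hpi : (0:ℝ) < π := Real.pi_pos
  -- cos (2ε) > √2/2 > 2/3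
  have hcos2ε : Real.sqrt 2 / 2 < Real.cos (2 * ε) := by
    have h1 : Real.cos (π / 4) < Real.cos (2 * ε) := by
      apply Real.cos_lt_cos_of_nonneg_of_le_pi (by linarith) (by linarith) (by linarith)
    rwa [Real.cos_pi_div_four] at h1
  have hsqrt2 : (4:ℝ)/3 < Real.sqrt 2 := by
    nlinarith [Real.sq_sqrt (by norm_num : (2:ℝ) ≥ 0), Real.sqrt_nonneg 2]
  have hkey : (1 : ℝ) / 2 < 0.9 * Real.cos (2 * ε) - 0.1 := by nlinarith
  intro t ht hβt
  have hr : (0:ℝ) < ‖β t‖ := by linarith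
  have hβtne : β t ≠ u₀ := by
    intro h
    rw [h] at hβt
    linarith
  have hv : β' t ≠ 0 := hβ'ne t ht
  have hw : β t - u₀ ≠ 0 := sub_ne_zero.mpr hβtne
  have hvnorm : (0:ℝ) < ‖β' t‖ := norm_pos_iff.mpr hv
  have hwnorm : (0:ℝ) < ‖β t - u₀‖ := norm_pos_iff.mpr hw
  -- ‖β t - u₀‖ ≥ 0.9 ‖β t‖
  have hwlb : 0.9 * ‖β t‖ ≤ ‖β t - u₀‖ := by
    have := norm_sub_norm_le (β t) u₀
    linarith
  -- cos of angle between β' t and β t - u₀ is ≥ cos 2ε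
  have hcosge : Real.cos (2 * ε) ≤ Real.cos (angle (β' t) (β t - u₀)) := by
    apply Real.cos_le_cos_of_nonneg_of_le_pi (InnerProductGeometry.angle_nonneg _ _)
      (by linarith) (hangle t ht hβtne)
  have hinner1 : Real.cos (2 * ε) * (‖β' t‖ * ‖β t - u₀‖) ≤
      inner ℝ (β' t) (β t - u₀) := by
    rw [← InnerProductGeometry.cos_angle_mul_norm_mul_norm (β' t) (β t - u₀)]
    exact mul_le_mul_of_nonneg_right hcosge (by positivity)
  have hinner2 : -(‖u₀‖ * ‖β' t‖) ≤ (inner ℝ (β' t) u₀ : ℝ) := by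
    have h := abs_real_inner_le_norm (β' t) u₀
    have := abs_le.mp h
    nlinarith [this.1]
  have hsplit : (inner ℝ (β t) (β' t) : ℝ) = inner ℝ (β' t) (β t - u₀) + inner ℝ (β' t) u₀ := by
    rw [real_inner_comm]
    rw [← inner_add_right]
    congr 1
    abel
  have hcoseq : Real.cos (angle (β t) (β' t)) =
      (inner ℝ (β t) (β' t) : ℝ) / (‖β t‖ * ‖β' t‖) :=
    InnerProductGeometry.cos_angle _ _
  have hmain : 0.9 * Real.cos (2 * ε) - 0.1 ≤ Real.cos (angle (β t) (β' t)) := by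
    rw [hcoseq, le_div_iff₀ (by positivity)]
    have hc2pos : (0:ℝ) < Real.cos (2 * ε) := by
      have : (0:ℝ) < Real.sqrt 2 / 2 := by positivity
      linarith
    have hub : ‖u₀‖ ≤ 0.1 * ‖β t‖ := by linarith
    have h1 : Real.cos (2 * ε) * (‖β' t‖ * (0.9 * ‖β t‖)) ≤
        Real.cos (2 * ε) * (‖β' t‖ * ‖β t - u₀‖) := by
      apply mul_le_mul_of_nonneg_left _ hc2pos.le
      exact mul_le_mul_of_nonneg_left hwlb hvnorm.le
    rw [hsplit]
    nlinarith
  refine ⟨hmain, hkey, ?_⟩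
  by_contra hcon
  push_neg at hcon
  have h3 : Real.cos (angle (β t) (β' t)) ≤ Real.cos (π / 3) :=
    Real.cos_le_cos_of_nonneg_of_le_pi (by linarith) (InnerProductGeometry.angle_le_pi _ _) hcon
  rw [Real.cos_pi_div_three] at h3
  linarith
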